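/- For every prime p ≥ 5, the central-type binomial coefficient C(2p-1, p-1) ≡ 1 (mod p^3). -/

import Mathlib

open Finset

/-- Vandermonde squared: `C(2p, p) = ∑ C(p,i)²`. -/
lemma wol_choose_sq_sum (p : ℕ) :
    (2 * p).choose p = ∑ i ∈ range (p + 1), p.choose i * p.choose i := by
  rw [two_mul, Nat.add_choose_eq, Finset.Nat.sum_antidiagonal_eq_sum_range_succ_mk]
  refine Finset.sum_congr rfl fun i hi => ?_
  simp only [mem_range] at hi
  rw [Nat.choose_symm (by omega : i ≤ p)]

/-- `C(p-1, k) ≡ (-1)^k (mod p)` for `k < p`. -/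
lemma wol_choose_sub_one (p : ℕ) (hp : p.Prime) :
    ∀ k, k < p → ((p - 1).choose k : ZMod p) = (-1) ^ k := by
  obtain ⟨q, rfl⟩ : ∃ q, p = q + 1 := ⟨p - 1, by have := hp.pos; omega⟩
  simp only [Nat.add_sub_cancel]
  intro k
  induction k with
  | zero => simp
  | succ k ih =>
    intro hk
    have h1 : q.choose k + q.choose (k + 1) = (q + 1).choose (k + 1) :=
      (Nat.choose_succ_succ _ _).symm
    have h2 : (((q + 1).choose (k + 1) : ℕ) : ZMod (q + 1)) = 0 := by
      rw [ZMod.natCast_eq_zero_iff]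
      exact hp.dvd_choose_self (Nat.succ_ne_zero k) hk
    have h3 : (q.choose k : ZMod (q + 1)) + (q.choose (k + 1) : ZMod (q + 1)) = 0 := by
      rw [← Nat.cast_add, h1]; exact h2
    rw [ih (by omega)] at h3
    have h4 : (q.choose (k + 1) : ZMod (q + 1)) = -(-1) ^ k := by linear_combination h3
    rw [h4, pow_succ]; ring

/-- `C(2(q+1), q+1) = 2·C(2(q+1)-1, q)`. -/
lemma wol_double (q : ℕ) : (2 * (q + 1)).choose (q + 1) = 2 * (2 * (q + 1) - 1).choose q := by
  have e : 2 * (q + 1) - 1 = 2 * q + 1 := by omega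
  have e2 : 2 * (q + 1) = (2 * q + 1) + 1 := by omega
  rw [e, e2, Nat.choose_succ_succ, Nat.choose_symm_half]
  ring

theorem wolstenholme_binomial (p : ℕ) (hp : p.Prime) (h5 : 5 ≤ p) :
    ((Nat.choose (2 * p - 1) (p - 1) : ℤ)) ≡ 1 [ZMOD (p ^ 3 : ℕ)] := by
  haveI : Fact p.Prime := ⟨hp⟩
  have hp0 : 0 < p := hp.pos
  -- the quotients b i = C(p,i)/p
  set b : ℕ → ℕ := fun i => p.choose i / p with hb'
  have hb : ∀ i ∈ Ico 1 p, p.choose i = p * b i := fun i hi => by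
    simp only [mem_Ico] at hi
    exact (Nat.mul_div_cancel' (hp.dvd_choose_self (by omega) hi.2)).symm
  -- key: p ∣ ∑ b i ^ 2
  have hsum : (p : ℤ) ∣ ∑ i ∈ Ico 1 p, (b i : ℤ) ^ 2 := by
    have hz0 : ((∑ i ∈ Ico 1 p, (b i) ^ 2 : ℕ) : ZMod p) = 0 := by
      push_cast
      -- each b i = (-1)^(i-1) * i⁻¹ in ZMod p
      have hbi : ∀ i ∈ Ico 1 p, ((b i : ZMod p)) ^ 2 = ((i : ZMod p)⁻¹) ^ 2 := by
        intro i hi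
        simp only [mem_Ico] at hi
        have hne : (i : ZMod p) ≠ 0 := by
          rw [Ne, ZMod.natCast_eq_zero_iff]
          exact fun h => by have := Nat.le_of_dvd (by omega) h; omega
        -- Nat identity: p * C(p-1, i-1) = C(p, i) * i
        have hid : p * (p - 1).choose (i - 1) = p.choose i * i := by
          have h := Nat.add_one_mul_choose_eq (p - 1) (i - 1)
          have e1 : p - 1 + 1 = p := by omega
          have e2 : i - 1 + 1 = i := by omega
          rwa [e1, e2] at h
        rw [hb i (by simp [mem_Ico]; omega)] at hid
        have hcancel : (p - 1).choose (i - 1) = b i * i := by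
          rw [Nat.mul_assoc] at hid
          exact Nat.eq_of_mul_eq_mul_left hp0 hid
        have hz : ((b i : ZMod p)) * i = (-1) ^ (i - 1) := by
          rw [← wol_choose_sub_one p hp (i - 1) (by omega), hcancel]
          push_cast
          ring
        have hbval : (b i : ZMod p) = (-1) ^ (i - 1) * (i : ZMod p)⁻¹ := by
          rw [eq_mul_inv_iff_mul_eq₀ hne, hz]
        rw [hbval, mul_pow, ← pow_mul, mul_comm (i - 1) 2, pow_mul]
        norm_num
      rw [Finset.sum_congr rfl hbi]
      -- extend to full range and reindex
      have h0 : ∑ i ∈ Ico 1 p, ((i : ZMod p)⁻¹) ^ 2 = ∑ i ∈ range p, ((i : ZMod p)⁻¹) ^ 2 := by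
        rw [range_eq_Ico, Finset.sum_eq_sum_Ico_succ_bot hp0]
        simp
      rw [h0]
      have h1 : ∑ i ∈ range p, ((i : ZMod p)⁻¹) ^ 2 = ∑ x : ZMod p, (x⁻¹) ^ 2 := by
        refine Finset.sum_nbij' (fun i => (i : ZMod p)) (fun x => x.val) ?_ ?_ ?_ ?_ ?_
        · intro i _; exact mem_univ _
        · intro x _; exact mem_range.mpr (ZMod.val_lt x)
        · intro i hi; exact ZMod.val_cast_of_lt (mem_range.mp hi)
        · intro x _; exact ZMod.natCast_rightInverse x
        · intro i _; rfl
      rw [h1]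
      have h2 : ∑ x : ZMod p, (x⁻¹) ^ 2 = ∑ x : ZMod p, x ^ 2 :=
        Equiv.sum_comp (Equiv.inv (ZMod p)) (fun x => x ^ 2)
      rw [h2]
      have hcard : 2 < Fintype.card (ZMod p) - 1 := by rw [ZMod.card]; omega
      exact FiniteField.sum_pow_lt_card_sub_one (ZMod p) 2 hcard
    have := (ZMod.natCast_eq_zero_iff _ _).mp hz0
    exact_mod_cast Int.natCast_dvd_natCast.mpr this
  -- C(2p, p) ≡ 2 mod p^3
  have hmain : (p : ℤ) ^ 3 ∣ ((2 * p).choose p : ℤ) - 2 := by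
    have hsplit : ((2 * p).choose p : ℤ) - 2 = ∑ i ∈ Ico 1 p, ((p.choose i : ℤ)) ^ 2 := by
      have h1 : ((2 * p).choose p : ℤ) = ∑ i ∈ range (p + 1), (p.choose i : ℤ) ^ 2 := by
        rw [wol_choose_sq_sum p]; push_cast; simp [sq]
      rw [h1, Finset.sum_range_succ, range_eq_Ico, Finset.sum_eq_sum_Ico_succ_bot hp0]
      simp [Nat.choose_self, Nat.choose_zero_right]
      ring
    rw [hsplit]
    have heq : ∑ i ∈ Ico 1 p, ((p.choose i : ℤ)) ^ 2
        = (p : ℤ) ^ 2 * ∑ i ∈ Ico 1 p, (b i : ℤ) ^ 2 := by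
      rw [Finset.mul_sum]
      refine Finset.sum_congr rfl fun i hi => ?_
      rw [hb i hi]
      push_cast
      ring
    rw [heq]
    obtain ⟨c, hc⟩ := hsum
    rw [hc]
    exact ⟨c, by ring⟩
  -- C(2p,p) = 2 * C(2p-1, p-1)
  have hdouble : (2 * p).choose p = 2 * (2 * p - 1).choose (p - 1) := by
    have h := wol_double (p - 1)
    have e : p - 1 + 1 = p := by omega
    rwa [e] at h
  have hfinal : ((p : ℤ) ^ 3) ∣ 2 * (((2 * p - 1).choose (p - 1) : ℤ) - 1) := by
    have h : 2 * (((2 * p - 1).choose (p - 1) : ℤ) - 1) = ((2 * p).choose p : ℤ) - 2 := by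
      rw [hdouble]; push_cast; ring
    rw [h]; exact hmain
  have hcop : IsCoprime ((p : ℤ) ^ 3) 2 := by
    rw [Int.isCoprime_iff_gcd_eq_one]
    have h2 : Nat.gcd (p ^ 3) 2 = 1 :=
      Nat.Coprime.pow_left 3 ((Nat.coprime_primes hp Nat.prime_two).mpr (by omega))
    rw [show ((p : ℤ) ^ 3) = ((p ^ 3 : ℕ) : ℤ) by push_cast; ring,
      show (2 : ℤ) = ((2 : ℕ) : ℤ) by norm_num, Int.gcd_natCast_natCast]
    exact h2
  have hdvd : ((p : ℤ) ^ 3) ∣ (((2 * p - 1).choose (p - 1) : ℤ) - 1) :=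
    hcop.dvd_of_dvd_mul_left hfinal
  refine Int.ModEq.symm (Int.modEq_iff_dvd.mpr ?_)
  rw [show ((p ^ 3 : ℕ) : ℤ) = (p : ℤ) ^ 3 by push_cast; ring]
  exact hdvd
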